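/- arXiv:2102.11897 — 2 statements merged into one kernel-verified Lean document; each statement's English description precedes it below -/
import Mathlib

section
/- Let k ≥ 1 be an integer, let p₁, …, p_k be primes, let a₁, …, a_k be integers with gcd(a_j, p_j) = 1 for each j, let ρ ≥ 0 be real, and let x > 0 be real. Then ∑'_{n₁n₂⋯n_k ≤ x} n₁n₂⋯n_k (∏_{j=1}^{k} sin(2π n_j a_j/p_j)) (x² − (n₁⋯n_k)²)^{ρ} = ((−i)^k / (φ(p₁)⋯φ(p_k))) ∑_{χ₁ odd mod p₁} ⋯ ∑_{χ_k odd mod p_k} (∏_{j=1}^{k} χ_j(a_j) τ(χ̄_j)) · ∑'_{n ≤ x} n·d_{χ₁,…,χ_k}(n) (x² − n²)^{ρ}, where the outer sums on the right run over all odd Dirichlet characters modulo p₁, …, p_k respectively. -/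
open Complex
open scoped Real Classical

/-- The Gauss sum `τ(χ) = ∑_{m=1}^{q} χ(m) e^{2πi m/q}`. -/
noncomputable def gaussTau {q : ℕ} (χ : DirichletCharacter ℂ q) : ℂ :=
  ∑ m ∈ Finset.Icc 1 q, χ m * Complex.exp (2 * π * Complex.I * m / q)

/-- The complex conjugate of a Dirichlet character. -/
noncomputable def conjChar {q : ℕ} (χ : DirichletCharacter ℂ q) :
    DirichletCharacter ℂ q :=
  χ.ringHomComp (starRingEnd ℂ)

/-- The `k`-fold twisted divisor function
`d_{χ₁,…,χ_k}(n) = ∑_{n₁⋯n_k = n} χ₁(n₁)⋯χ_k(n_k)`. -/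
noncomputable def dChiK {k : ℕ} {p : Fin k → ℕ}
    (χ : ∀ j, DirichletCharacter ℂ (p j)) (n : ℕ) : ℂ :=
  ∑ t ∈ (Fintype.piFinset fun _ : Fin k => n.divisors).filter
      (fun t => ∏ j, t j = n),
    ∏ j, χ j (t j)

/-- The primed sum `∑'_{n ≤ x} f(n)`: for integer `x` the term `f(x)` is
counted with weight `1/2`. -/
noncomputable def primedSumC (x : ℝ) (f : ℕ → ℂ) : ℂ :=
  (∑ n ∈ Finset.Icc 1 ⌊x⌋₊, f n) -
    if (⌊x⌋₊ : ℝ) = x then (1/2 : ℂ) * f ⌊x⌋₊ else 0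

/-- The primed sum over ordered `k`-tuples of positive integers with product at
most `x`: for integer `x`, terms whose product equals `x` are counted with
weight `1/2`. -/
noncomputable def primedTupleSumC (k : ℕ) (x : ℝ) (f : (Fin k → ℕ) → ℂ) : ℂ :=
  (∑ t ∈ (Fintype.piFinset fun _ : Fin k => Finset.Icc 1 ⌊x⌋₊).filter
      (fun t => ((∏ j, t j : ℕ) : ℝ) ≤ x), f t) -
  if ∃ m : ℕ, (m : ℝ) = x then
    (1/2 : ℂ) * ∑ t ∈ (Fintype.piFinset fun _ : Fin k => Finset.Icc 1 ⌊x⌋₊).filter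
      (fun t => ((∏ j, t j : ℕ) : ℝ) = x), f t
  else 0

/-! ### Auxiliary lemmas -/

lemma exp_int_eq_val {p : ℕ} [NeZero p] (m : ℤ) :
    Complex.exp (2 * π * Complex.I * m / p) =
      Complex.exp (2 * π * Complex.I * ((m : ZMod p).val : ℕ) / p) := by
  have hp : (p : ℂ) ≠ 0 := by
    exact_mod_cast Nat.cast_ne_zero.mpr (NeZero.ne p)
  have hdvd : (p : ℤ) ∣ m - ((m : ZMod p).val : ℤ) := by
    rw [← ZMod.intCast_zmod_eq_zero_iff_dvd]
    push_cast
    rw [ZMod.natCast_rightInverse (m : ZMod p), sub_self]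
  obtain ⟨q, hq⟩ := hdvd
  have hm : (m : ℂ) = ((m : ZMod p).val : ℕ) + p * q := by
    have : ((m : ℂ)) - (((m : ZMod p).val : ℕ) : ℂ) = p * q := by
      exact_mod_cast congrArg (fun z : ℤ => (z : ℂ)) hq
    linear_combination this
  rw [hm]
  rw [show 2 * ↑π * I * (((((m : ZMod p).val : ℕ)) : ℂ) + ↑p * ↑q) / ↑p
      = 2 * ↑π * I * ((((m : ZMod p).val : ℕ)) : ℂ) / ↑p + ↑q * (2 * ↑π * I) by
    field_simp]
  rw [Complex.exp_add, Complex.exp_int_mul_two_pi_mul_I, mul_one]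

lemma gaussTau_eq_zmod_sum {p : ℕ} [NeZero p] (χ : DirichletCharacter ℂ p) :
    gaussTau χ = ∑ z : ZMod p, χ z * Complex.exp (2 * π * Complex.I * (z.val : ℕ) / p) := by
  have hp0 : 0 < p := Nat.pos_of_ne_zero (NeZero.ne p)
  unfold gaussTau
  refine Finset.sum_nbij' (i := fun m => (m : ZMod p))
    (j := fun z => if z = 0 then p else z.val) ?_ ?_ ?_ ?_ ?_
  · intro m _; exact Finset.mem_univ _
  · intro z _
    by_cases hz : z = 0
    · simp [hz, Finset.mem_Icc, hp0]; omega
    · simp only [hz, if_false, Finset.mem_Icc]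
      exact ⟨Nat.one_le_iff_ne_zero.mpr (fun h => hz (by rwa [← ZMod.val_eq_zero])),
        (ZMod.val_lt z).le⟩
  · intro m hm
    rw [Finset.mem_Icc] at hm
    by_cases h : (m : ZMod p) = 0
    · have : p ∣ m := (ZMod.natCast_eq_zero_iff m p).mp h
      have : m = p := le_antisymm hm.2 (Nat.le_of_dvd (lt_of_lt_of_le Nat.one_pos hm.1) this)
      simp [h, this]
    · have hlt : m < p := by
        rcases lt_or_eq_of_le hm.2 with h' | h'
        · exact h'
        · exact absurd (by simp [h']) h
      simp [h, ZMod.val_cast_of_lt hlt]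
  · intro z _
    by_cases hz : z = 0
    · simp [hz]
    · simp [hz, ZMod.natCast_rightInverse z]
  · intro m _
    congr 1
    have := exp_int_eq_val (p := p) (m : ℤ)
    push_cast at this
    exact this

lemma conjChar_apply {q : ℕ} (χ : DirichletCharacter ℂ q) (z : ZMod q) :
    conjChar χ z = star (χ z) := rfl

lemma sum_all_char_mul_conj {p : ℕ} [NeZero p] (u v : ZMod p) :
    ∑ χ : DirichletCharacter ℂ p, χ u * conjChar χ v =
      if IsUnit v ∧ u = v then (p.totient : ℂ) else 0 := by
  by_cases hv : IsUnit v
  · have key : ∀ χ : DirichletCharacter ℂ p, conjChar χ v = χ v⁻¹ := by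
      intro χ
      rw [conjChar_apply, MulChar.star_apply' χ v, MulChar.inv_apply_eq_inv']
      exact inv_eq_of_mul_eq_one_right (by rw [← map_mul, ZMod.mul_inv_of_unit v hv, map_one])
    simp only [key]
    have := DirichletCharacter.sum_char_inv_mul_char_eq ℂ (n := p) hv u
    simp only [mul_comm] at this ⊢
    rw [this]
    by_cases h : v = u
    · simp [h, h ▸ hv]
    · rw [if_neg h, if_neg (fun hc : IsUnit v ∧ u = v => h hc.2.symm)]
  · have : ∀ χ : DirichletCharacter ℂ p, conjChar χ v = 0 := fun χ => by
      rw [conjChar_apply, MulChar.map_nonunit χ hv, star_zero]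
    simp [this, hv]

lemma sum_odd_char_mul_conj {p : ℕ} [NeZero p] (u v : ZMod p) :
    ∑ χ ∈ Finset.univ.filter (fun χ : DirichletCharacter ℂ p => χ.Odd),
        χ u * conjChar χ v =
      (1/2 : ℂ) * ((if IsUnit v ∧ u = v then (p.totient : ℂ) else 0)
        - (if IsUnit v ∧ -u = v then (p.totient : ℂ) else 0)) := by
  have hptwise : ∀ χ : DirichletCharacter ℂ p,
      (if χ.Odd then χ u * conjChar χ v else 0)
        = (1/2 : ℂ) * (χ u * conjChar χ v - χ (-u) * conjChar χ v) := by
    intro χ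
    have hmap : χ (-u) = χ (-1) * χ u := by rw [← map_mul, neg_one_mul]
    rcases DirichletCharacter.even_or_odd χ with he | ho
    · have hno : ¬ χ.Odd := by
        intro ho
        rw [DirichletCharacter.Even] at he
        rw [DirichletCharacter.Odd, he] at ho
        norm_num at ho
      rw [if_neg hno, hmap, he, one_mul, sub_self, mul_zero]
    · rw [if_pos ho, hmap, ho]
      ring
  rw [Finset.sum_filter, Finset.sum_congr rfl (fun χ _ => hptwise χ), ← Finset.mul_sum,
    Finset.sum_sub_distrib, sum_all_char_mul_conj u v]
  congr 2
  exact sum_all_char_mul_conj (-u) v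

lemma sin_eq_char_sum {p : ℕ} (hp : p.Prime) (a : ℤ) (n : ℕ) :
    ((Real.sin (2 * π * (n : ℝ) * ((a : ℤ) : ℝ) / (p : ℝ)) : ℝ) : ℂ) =
      (-Complex.I) / (p.totient : ℂ) *
        ∑ χ ∈ Finset.univ.filter (fun χ : DirichletCharacter ℂ p => χ.Odd),
          χ ((a : ZMod p)) * gaussTau (conjChar χ) * χ ((n : ZMod p)) := by
  haveI : Fact p.Prime := ⟨hp⟩
  haveI : NeZero p := ⟨hp.ne_zero⟩
  set E : ZMod p → ℂ := fun z => Complex.exp (2 * π * Complex.I * (z.val : ℕ) / p) with hE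
  set w : ZMod p := ((n * a : ℤ) : ZMod p) with hw
  have hφ : (p.totient : ℂ) ≠ 0 :=
    Nat.cast_ne_zero.mpr (Nat.totient_pos.mpr hp.pos).ne'
  have h1 : ∀ χ : DirichletCharacter ℂ p,
      χ ((a : ZMod p)) * gaussTau (conjChar χ) * χ ((n : ZMod p))
        = ∑ z : ZMod p, χ w * conjChar χ z * E z := by
    intro χ
    have hmul : χ ((a : ZMod p)) * χ ((n : ZMod p)) = χ w := by
      rw [← map_mul]
      congr 1
      rw [hw]
      push_cast
      ring
    rw [gaussTau_eq_zmod_sum (conjChar χ), Finset.mul_sum, Finset.sum_mul]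
    refine Finset.sum_congr rfl fun z _ => ?_
    rw [← hmul, hE]
    ring
  have h2 : (∑ χ ∈ Finset.univ.filter (fun χ : DirichletCharacter ℂ p => χ.Odd),
        χ ((a : ZMod p)) * gaussTau (conjChar χ) * χ ((n : ZMod p)))
      = ∑ z : ZMod p, ((1/2 : ℂ) * ((if IsUnit z ∧ w = z then (p.totient : ℂ) else 0)
          - (if IsUnit z ∧ -w = z then (p.totient : ℂ) else 0))) * E z := by
    rw [Finset.sum_congr rfl fun χ _ => h1 χ, Finset.sum_comm]
    refine Finset.sum_congr rfl fun z _ => ?_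
    rw [← Finset.sum_mul, sum_odd_char_mul_conj w z]
  have hdelta : ∀ y : ZMod p,
      (∑ z : ZMod p, (if IsUnit z ∧ y = z then (p.totient : ℂ) else 0) * E z)
        = if IsUnit y then (p.totient : ℂ) * E y else 0 := by
    intro y
    rw [Finset.sum_eq_single y]
    · by_cases h : IsUnit y
      · rw [if_pos ⟨h, rfl⟩, if_pos h]
      · rw [if_neg (fun hc => h hc.1), if_neg h, zero_mul]
    · intro z _ hzy
      rw [if_neg (fun hc => hzy hc.2.symm), zero_mul]
    · intro h; exact absurd (Finset.mem_univ y) h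
  have h3 : (∑ χ ∈ Finset.univ.filter (fun χ : DirichletCharacter ℂ p => χ.Odd),
        χ ((a : ZMod p)) * gaussTau (conjChar χ) * χ ((n : ZMod p)))
      = ((p.totient : ℂ)/2) * (E w - E (-w)) := by
    rw [h2]
    have : ∀ z : ZMod p, ((1/2 : ℂ) * ((if IsUnit z ∧ w = z then (p.totient : ℂ) else 0)
          - (if IsUnit z ∧ -w = z then (p.totient : ℂ) else 0))) * E z
        = (1/2 : ℂ) * ((if IsUnit z ∧ w = z then (p.totient : ℂ) else 0) * E z
          - (if IsUnit z ∧ -w = z then (p.totient : ℂ) else 0) * E z) := fun z => by ring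
    rw [Finset.sum_congr rfl fun z _ => this z, ← Finset.mul_sum, Finset.sum_sub_distrib,
      hdelta w, hdelta (-w)]
    by_cases h : IsUnit w
    · rw [if_pos h, if_pos h.neg]; ring
    · have hw0 : w = 0 := by
        by_contra h0
        exact h (isUnit_iff_ne_zero.mpr h0)
      rw [if_neg h, if_neg (fun hc => h ((IsUnit.neg_iff w).mp hc)), hw0, neg_zero,
        sub_self, sub_self, mul_zero]
      ring
  rw [h3]
  have hEw : E w = Complex.exp (2 * π * Complex.I * ((n * a : ℤ) : ℂ) / p) :=
    (exp_int_eq_val (p := p) (n * a)).symm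
  have hEnw : E (-w) = Complex.exp (2 * π * Complex.I * ((-(n * a) : ℤ) : ℂ) / p) := by
    have := (exp_int_eq_val (p := p) (-(n * a))).symm
    rw [hw]
    convert this using 3
    push_cast
    ring
  rw [hEw, hEnw]
  have harg1 : 2 * ↑π * I * ((n * a : ℤ) : ℂ) / p
      = ((2 * π * (n : ℝ) * ((a : ℤ) : ℝ) / (p : ℝ) : ℝ) : ℂ) * I := by
    push_cast; ring
  have harg2 : 2 * ↑π * I * ((-(n * a) : ℤ) : ℂ) / p
      = -(((2 * π * (n : ℝ) * ((a : ℤ) : ℝ) / (p : ℝ) : ℝ) : ℂ)) * I := by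
    push_cast; ring
  rw [harg1, harg2]
  set θ : ℂ := ((2 * π * (n : ℝ) * ((a : ℤ) : ℝ) / (p : ℝ) : ℝ) : ℂ) with hθ
  rw [Complex.ofReal_sin, Complex.exp_mul_I, Complex.exp_mul_I, Complex.sin_neg,
    Complex.cos_neg]
  generalize Complex.sin θ = S
  generalize Complex.cos θ = C
  field_simp
  linear_combination (2 * S) * Complex.I_sq

lemma primedTupleSumC_sum {k : ℕ} (x : ℝ) {ι : Type*} (s : Finset ι)
    (f : ι → (Fin k → ℕ) → ℂ) :
    primedTupleSumC k x (fun t => ∑ i ∈ s, f i t)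
      = ∑ i ∈ s, primedTupleSumC k x (f i) := by
  unfold primedTupleSumC
  rw [Finset.sum_sub_distrib]
  congr 1
  · exact Finset.sum_comm
  · split_ifs with h
    · rw [Finset.sum_comm, Finset.mul_sum]
    · rw [Finset.sum_const_zero]

lemma primedTupleSumC_const_mul {k : ℕ} (x : ℝ) (c : ℂ) (f : (Fin k → ℕ) → ℂ) :
    primedTupleSumC k x (fun t => c * f t) = c * primedTupleSumC k x f := by
  unfold primedTupleSumC
  rw [mul_sub]
  congr 1
  · rw [Finset.mul_sum]
  · split_ifs with h
    · rw [Finset.mul_sum, ← Finset.mul_sum, ← Finset.mul_sum]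
      ring
    · rw [mul_zero]

lemma tupleSum_eq_primedSum {k : ℕ} {p : Fin k → ℕ}
    (χ : ∀ j, DirichletCharacter ℂ (p j)) {x : ℝ} (hx : 0 < x) (G : ℕ → ℂ) :
    primedTupleSumC k x (fun t => G (∏ j, t j) * ∏ j, χ j (t j)) =
      primedSumC x (fun n => G n * dChiK χ n) := by
  have hset : ∀ n : ℕ, 1 ≤ n → n ≤ ⌊x⌋₊ →
      ((Fintype.piFinset fun _ : Fin k => Finset.Icc 1 ⌊x⌋₊).filter
          (fun t => ((∏ j, t j : ℕ) : ℝ) ≤ x)).filter (fun t => ∏ j, t j = n)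
        = (Fintype.piFinset fun _ : Fin k => n.divisors).filter
          (fun t => ∏ j, t j = n) := by
    intro n h1 h2
    ext t
    simp only [Finset.mem_filter, Fintype.mem_piFinset, Finset.mem_Icc, Nat.mem_divisors]
    constructor
    · rintro ⟨⟨ht, -⟩, hprod⟩
      exact ⟨fun j => ⟨hprod ▸ Finset.dvd_prod_of_mem _ (Finset.mem_univ j), by omega⟩, hprod⟩
    · rintro ⟨ht, hprod⟩
      have hn0 : 0 < n := h1
      have htj : ∀ j, 1 ≤ t j ∧ t j ≤ ⌊x⌋₊ := fun j =>
        ⟨Nat.pos_of_dvd_of_pos (ht j).1 hn0,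
         le_trans (Nat.le_of_dvd hn0 (ht j).1) h2⟩
      refine ⟨⟨htj, ?_⟩, hprod⟩
      rw [hprod]
      calc (n : ℝ) ≤ (⌊x⌋₊ : ℝ) := by exact_mod_cast h2
        _ ≤ x := Nat.floor_le hx.le
  have hinner : ∀ n : ℕ, (∑ t ∈ (Fintype.piFinset fun _ : Fin k => n.divisors).filter
        (fun t => ∏ j, t j = n), G (∏ j, t j) * ∏ j, χ j (t j))
      = G n * dChiK χ n := by
    intro n
    rw [dChiK, Finset.mul_sum]
    refine Finset.sum_congr rfl fun t ht => ?_
    rw [(Finset.mem_filter.mp ht).2]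
  unfold primedTupleSumC primedSumC
  congr 1
  · rw [← Finset.sum_fiberwise_of_maps_to (g := fun t : Fin k → ℕ => ∏ j, t j)
        (t := Finset.Icc 1 ⌊x⌋₊) ?_ (fun t => G (∏ j, t j) * ∏ j, χ j (t j))]
    · refine Finset.sum_congr rfl fun n hn => ?_
      rw [Finset.mem_Icc] at hn
      rw [hset n hn.1 hn.2, hinner n]
    · intro t ht
      rw [Finset.mem_filter, Fintype.mem_piFinset] at ht
      obtain ⟨ht1, ht2⟩ := ht
      rw [Finset.mem_Icc]
      constructor
      · exact Finset.one_le_prod' fun j _ => (Finset.mem_Icc.mp (ht1 j)).1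
      · exact Nat.le_floor ht2
  · have hiff : (∃ m : ℕ, (m : ℝ) = x) ↔ ((⌊x⌋₊ : ℝ) = x) := by
      constructor
      · rintro ⟨m, rfl⟩
        rw [Nat.floor_natCast]
      · intro h; exact ⟨⌊x⌋₊, h⟩
    split_ifs with h1 h2 h2
    · have hfl : 1 ≤ ⌊x⌋₊ := by
        by_contra hc
        push_neg at hc
        have h0 : ⌊x⌋₊ = 0 := by omega
        rw [h0, Nat.cast_zero] at h2
        linarith
      congr 1
      have hsetc : (Fintype.piFinset fun _ : Fin k => Finset.Icc 1 ⌊x⌋₊).filter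
            (fun t => ((∏ j, t j : ℕ) : ℝ) = x)
          = (Fintype.piFinset fun _ : Fin k => (⌊x⌋₊).divisors).filter
            (fun t => ∏ j, t j = ⌊x⌋₊) := by
        ext t
        simp only [Finset.mem_filter, Fintype.mem_piFinset, Finset.mem_Icc, Nat.mem_divisors]
        constructor
        · rintro ⟨ht, hprod⟩
          have hprod' : ∏ j, t j = ⌊x⌋₊ := by
            have : ((∏ j, t j : ℕ) : ℝ) = ((⌊x⌋₊ : ℕ) : ℝ) := by rw [hprod, h2]
            exact_mod_cast this
          exact ⟨fun j => ⟨hprod' ▸ Finset.dvd_prod_of_mem _ (Finset.mem_univ j), by omega⟩,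
            hprod'⟩
        · rintro ⟨ht, hprod⟩
          have hn0 : 0 < ⌊x⌋₊ := hfl
          refine ⟨fun j => ⟨Nat.pos_of_dvd_of_pos (ht j).1 hn0,
            Nat.le_of_dvd hn0 (ht j).1⟩, ?_⟩
          rw [hprod, h2]
      rw [hsetc, hinner ⌊x⌋₊]
    · exact absurd (hiff.mp h1) h2
    · exact absurd (hiff.mpr h2) h1
    · rfl

theorem sine_sum_eq_character_sum {k : ℕ} (hk : 1 ≤ k) {p : Fin k → ℕ}
    (hp : ∀ j, (p j).Prime) (a : Fin k → ℤ)
    (ha : ∀ j, Int.gcd (a j) (p j) = 1)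
    (ρ : ℝ) (hρ : 0 ≤ ρ) (x : ℝ) (hx : 0 < x) :
    primedTupleSumC k x (fun t =>
        ((((∏ j, t j : ℕ) : ℝ) * (∏ j, Real.sin (2 * π * (t j) * (a j) / (p j))) *
          ((x ^ 2 - ((∏ j, t j : ℕ) : ℝ) ^ 2) ^ ρ) : ℝ) : ℂ)) =
      (-Complex.I) ^ k / (∏ j, (Nat.totient (p j) : ℂ)) *
        ∑ χ ∈ Fintype.piFinset
            (fun j => Finset.univ.filter
              fun χ : DirichletCharacter ℂ (p j) => χ.Odd),
          (∏ j, (χ j) ((a j) : ZMod (p j)) * gaussTau (conjChar (χ j))) *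
            primedSumC x (fun n =>
              (n : ℂ) * dChiK χ n * (((x ^ 2 - (n : ℝ) ^ 2) ^ ρ : ℝ) : ℂ)) := by
  set O : ∀ j : Fin k, Finset (DirichletCharacter ℂ (p j)) :=
    fun j => Finset.univ.filter fun χ => χ.Odd with hO
  set G : ℕ → ℂ := fun n => (n : ℂ) * (((x ^ 2 - (n : ℝ) ^ 2) ^ ρ : ℝ) : ℂ) with hG
  set W : (∀ j, DirichletCharacter ℂ (p j)) → ℂ :=
    fun χ => ∏ j, ((-Complex.I) / ((p j).totient : ℂ) *
      (χ j ((a j : ZMod (p j))) * gaussTau (conjChar (χ j)))) with hW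
  have hF : (fun t : Fin k → ℕ =>
      ((((∏ j, t j : ℕ) : ℝ) * (∏ j, Real.sin (2 * π * (t j) * (a j) / (p j))) *
        ((x ^ 2 - ((∏ j, t j : ℕ) : ℝ) ^ 2) ^ ρ) : ℝ) : ℂ))
      = fun t => ∑ χ ∈ Fintype.piFinset O,
          W χ * (G (∏ j, t j) * ∏ j, (χ j) ((t j : ZMod (p j)))) := by
    funext t
    rw [Complex.ofReal_mul, Complex.ofReal_mul, Complex.ofReal_prod]
    have hsin : ∀ j, ((Real.sin (2 * π * (t j) * (a j) / (p j)) : ℝ) : ℂ)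
        = ∑ χ ∈ O j, (-Complex.I) / ((p j).totient : ℂ) *
            (χ ((a j : ZMod (p j))) * gaussTau (conjChar χ)) * χ ((t j : ZMod (p j))) := by
      intro j
      rw [sin_eq_char_sum (hp j) (a j) (t j), Finset.mul_sum]
      refine Finset.sum_congr rfl fun χ _ => ?_
      ring
    rw [Finset.prod_congr rfl fun j _ => hsin j, Finset.prod_univ_sum]
    rw [Finset.mul_sum, Finset.sum_mul]
    refine Finset.sum_congr rfl fun χ _ => ?_
    rw [hW, hG]
    simp only []
    rw [Finset.prod_mul_distrib]
    push_cast
    ring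
  rw [hF, primedTupleSumC_sum, Finset.mul_sum]
  refine Finset.sum_congr rfl fun χ hχ => ?_
  rw [primedTupleSumC_const_mul, tupleSum_eq_primedSum χ hx G]
  have hWsplit : W χ = (-Complex.I) ^ k / (∏ j, ((p j).totient : ℂ)) *
      ∏ j, (χ j ((a j : ZMod (p j))) * gaussTau (conjChar (χ j))) := by
    rw [hW]
    simp only []
    rw [Finset.prod_mul_distrib, Finset.prod_div_distrib, Finset.prod_const,
      Finset.card_univ, Fintype.card_fin]
  have hfun : (fun n : ℕ => G n * dChiK χ n)
      = (fun n : ℕ => (n : ℂ) * dChiK χ n * (((x ^ 2 - (n : ℝ) ^ 2) ^ ρ : ℝ) : ℂ)) := by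
    funext n
    rw [hG]
    ring
  rw [hfun, hWsplit, mul_assoc]
end

section
/- Let a > 0, β ∈ ℝ, σ ∈ (0,1), and let w be a complex number with Re w > 1/4. Then there exists a constant C > 0, depending only on a, β, σ, and w, such that for every θ ∈ (0,1), every integer m ≥ 0, and every integer M ≥ 1, the series ∑_{n=M}^{∞} cos(a√((m+σ)(n+θ)) + β) / (n+θ)^{w+1/4} converges and its sum has absolute value at most C √(m+σ) / (M+θ)^{Re w − 1/4}. -/
open Filter Topology




lemma aux_cpow_deriv {θ : ℝ} (z : ℂ) (hz : z ≠ 0) {t : ℝ} (ht : 0 < t + θ) :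
    HasDerivAt (fun y : ℝ => ((y + θ : ℝ) : ℂ) ^ z) (z * ((t + θ : ℝ) : ℂ) ^ (z - 1)) t := by
  have hr : z - 1 ≠ -1 := by
    intro h; apply hz; linear_combination h
  have h0 := hasDerivAt_ofReal_cpow_const' (x := t + θ) (ne_of_gt ht) hr
  rw [sub_add_cancel] at h0
  have h1 : HasDerivAt (fun y : ℝ => ((y + θ : ℝ) : ℂ) ^ z / z) (((t + θ : ℝ) : ℂ) ^ (z - 1)) t := by
    have := HasDerivAt.comp_add_const t θ h0
    simpa using this
  have h2 := h1.const_mul z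
  have h3 : (fun y : ℝ => z * (((y + θ : ℝ) : ℂ) ^ z / z)) = fun y : ℝ => ((y + θ : ℝ) : ℂ) ^ z := by
    funext y; field_simp
  rw [h3] at h2
  simpa using h2

lemma aux_phi_deriv (a c θ β : ℝ) (hc : 0 < c) {t : ℝ} (ht : 0 < t + θ) :
    HasDerivAt (fun y : ℝ => a * Real.sqrt (c * (y + θ)) + β)
      (a * (c / (2 * Real.sqrt (c * (t + θ))))) t := by
  have hinner : HasDerivAt (fun y : ℝ => c * (y + θ)) c t := by
    simpa using ((hasDerivAt_id t).add_const θ).const_mul c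
  have houter := (Real.hasDerivAt_sqrt (ne_of_gt (mul_pos hc ht))).comp t hinner
  have h2 := (houter.const_mul a).add_const β
  exact h2.congr_deriv (by ring)

lemma aux_h_deriv (a c θ β : ℝ) (hc : 0 < c) (s : ℂ) (hz1 : -s ≠ 0) {t : ℝ} (ht : 0 < t + θ) :
    HasDerivAt (fun y : ℝ => ((Real.cos (a * Real.sqrt (c * (y + θ)) + β) : ℝ) : ℂ) * ((y + θ : ℝ) : ℂ) ^ (-s))
      (((-Real.sin (a * Real.sqrt (c * (t + θ)) + β) * (a * (c / (2 * Real.sqrt (c * (t + θ))))) : ℝ) : ℂ) * ((t + θ : ℝ) : ℂ) ^ (-s)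
        + ((Real.cos (a * Real.sqrt (c * (t + θ)) + β) : ℝ) : ℂ) * (-s * ((t + θ : ℝ) : ℂ) ^ (-s - 1))) t := by
  have hφ := aux_phi_deriv a c θ β hc ht
  have hcos : HasDerivAt (fun y : ℝ => ((Real.cos (a * Real.sqrt (c * (y + θ)) + β) : ℝ) : ℂ))
      (((-Real.sin (a * Real.sqrt (c * (t + θ)) + β) * (a * (c / (2 * Real.sqrt (c * (t + θ))))) : ℝ) : ℂ)) t := by
    have := ((Real.hasDerivAt_cos (a * Real.sqrt (c * (t + θ)) + β)).comp t hφ).ofReal_comp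
    simpa using this
  have hX := aux_cpow_deriv (-s) hz1 ht
  have := hcos.mul hX
  exact this

lemma aux_key_scalar (a c x : ℝ) (ha : 0 < a) (hc : 0 < c) (hx : 0 < x) :
    a * (c / (2 * Real.sqrt (c * x))) = (a * Real.sqrt c) / 2 * (Real.sqrt x)⁻¹ := by
  rw [Real.sqrt_mul hc.le]
  have h1 : 0 < Real.sqrt c := Real.sqrt_pos.2 hc
  have h2 : 0 < Real.sqrt x := Real.sqrt_pos.2 hx
  have h3 : Real.sqrt c * Real.sqrt c = c := Real.mul_self_sqrt hc.le
  field_simp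
  linear_combination (-1) * h3

lemma aux_sqrt_inv_cpow (x : ℝ) (hx : 0 < x) (s : ℂ) :
    ((((Real.sqrt x)⁻¹ : ℝ)) : ℂ) * ((x:ℝ):ℂ) ^ ((1:ℂ)/2 - s) = ((x:ℝ):ℂ) ^ (-s) := by
  have h1 : ((Real.sqrt x : ℝ) : ℂ) = ((x:ℝ):ℂ) ^ ((1:ℂ)/2) := by
    rw [Real.sqrt_eq_rpow, Complex.ofReal_cpow hx.le]
    norm_num
  have hx0 : ((x:ℝ):ℂ) ≠ 0 := by
    simp [Complex.ofReal_ne_zero]; linarith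
  rw [Complex.ofReal_inv, h1, ← Complex.cpow_neg, ← Complex.cpow_add _ _ hx0]
  congr 1
  ring

lemma aux_G_deriv (a c θ β : ℝ) (ha : 0 < a) (hc : 0 < c) (s : ℂ) (hz2 : (1:ℂ)/2 - s ≠ 0) {t : ℝ} (ht : 0 < t + θ) :
    HasDerivAt (fun y : ℝ => ((2 / (a * Real.sqrt c) : ℝ) : ℂ) *
        (((y + θ : ℝ) : ℂ) ^ ((1:ℂ)/2 - s) * ((Real.sin (a * Real.sqrt (c * (y + θ)) + β) : ℝ) : ℂ)))
      (((Real.cos (a * Real.sqrt (c * (t + θ)) + β) : ℝ) : ℂ) * ((t + θ : ℝ) : ℂ) ^ (-s)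
        + ((2 / (a * Real.sqrt c) : ℝ) : ℂ) * (((1:ℂ)/2 - s) * (((t + θ : ℝ) : ℂ) ^ ((1:ℂ)/2 - s - 1) * ((Real.sin (a * Real.sqrt (c * (t + θ)) + β) : ℝ) : ℂ)))) t := by
  have hφ := aux_phi_deriv a c θ β hc ht
  have hsin : HasDerivAt (fun y : ℝ => ((Real.sin (a * Real.sqrt (c * (y + θ)) + β) : ℝ) : ℂ))
      (((Real.cos (a * Real.sqrt (c * (t + θ)) + β) * (a * (c / (2 * Real.sqrt (c * (t + θ))))) : ℝ) : ℂ)) t := by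
    have := ((Real.hasDerivAt_sin (a * Real.sqrt (c * (t + θ)) + β)).comp t hφ).ofReal_comp
    simpa using this
  have hX := aux_cpow_deriv ((1:ℂ)/2 - s) hz2 ht
  have hprod := (hX.mul hsin).const_mul (((2 / (a * Real.sqrt c) : ℝ)) : ℂ)
  refine hprod.congr_deriv ?_
  have hsc := aux_key_scalar a c (t + θ) ha hc ht
  have hmul : ((2 / (a * Real.sqrt c) : ℝ) : ℂ) * ((a * (c / (2 * Real.sqrt (c * (t+θ)))) : ℝ) : ℂ)
      = ((((Real.sqrt (t+θ))⁻¹ : ℝ)) : ℂ) := by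
    rw [← Complex.ofReal_mul]
    congr 1
    rw [hsc]
    have h1 : 0 < Real.sqrt c := Real.sqrt_pos.2 hc
    have h2 : 0 < Real.sqrt (t+θ) := Real.sqrt_pos.2 ht
    field_simp
  have hkey2 := aux_sqrt_inv_cpow (t+θ) ht s
  rw [Complex.ofReal_mul, ← hkey2, ← hmul]
  ring





lemma aux_half_inv {x : ℝ} (hx : 0 < x) : (Real.sqrt x)⁻¹ = x ^ (-(1/2) : ℝ) := by
  rw [Real.sqrt_eq_rpow, ← Real.rpow_neg hx.le]

lemma aux_h'_norm (a c θ β : ℝ) (ha : 0 < a) (hc : 0 < c) (s : ℂ) (p : ℝ) (hp : s.re = p)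
    {t : ℝ} (ht : 0 < t + θ) :
    ‖(((-Real.sin (a * Real.sqrt (c * (t + θ)) + β) * (a * (c / (2 * Real.sqrt (c * (t + θ))))) : ℝ) : ℂ) * ((t + θ : ℝ) : ℂ) ^ (-s)
        + ((Real.cos (a * Real.sqrt (c * (t + θ)) + β) : ℝ) : ℂ) * (-s * ((t + θ : ℝ) : ℂ) ^ (-s - 1)))‖
      ≤ (a * Real.sqrt c) / 2 * (t + θ) ^ (-(p + 1/2)) + ‖s‖ * (t + θ) ^ (-(p + 1)) := by
  have hres : (-s).re = -p := by simp [hp]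
  have hres2 : (-s - 1).re = -(p + 1) := by simp [Complex.sub_re, hp]; ring
  have hx : 0 < t + θ := ht
  have hsq : 0 < Real.sqrt (t + θ) := Real.sqrt_pos.2 hx
  have e1 : ‖((-Real.sin (a * Real.sqrt (c * (t + θ)) + β) * (a * (c / (2 * Real.sqrt (c * (t + θ))))) : ℝ) : ℂ) * ((t + θ : ℝ) : ℂ) ^ (-s)‖
      ≤ (a * Real.sqrt c) / 2 * (t + θ) ^ (-(p + 1/2)) := by
    rw [norm_mul, Complex.norm_cpow_eq_rpow_re_of_pos hx, hres,
      Complex.norm_real, Real.norm_eq_abs, abs_mul, abs_neg]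
    have hφv : |a * (c / (2 * Real.sqrt (c * (t + θ))))| = (a * Real.sqrt c) / 2 * (t + θ) ^ (-(1/2) : ℝ) := by
      rw [abs_of_nonneg (by positivity), aux_key_scalar a c (t+θ) ha hc hx, aux_half_inv hx]
    rw [hφv]
    have hsin1 : |Real.sin (a * Real.sqrt (c * (t + θ)) + β)| ≤ 1 := Real.abs_sin_le_one _
    have hcomb : (t + θ) ^ (-(1/2) : ℝ) * (t + θ) ^ (-p) = (t + θ) ^ (-(p + 1/2)) := by
      rw [← Real.rpow_add hx]; congr 1; ring
    calc |Real.sin (a * Real.sqrt (c * (t + θ)) + β)| * ((a * Real.sqrt c) / 2 * (t + θ) ^ (-(1/2):ℝ)) * (t + θ) ^ (-p)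
        ≤ 1 * ((a * Real.sqrt c) / 2 * (t + θ) ^ (-(1/2):ℝ)) * (t + θ) ^ (-p) := by
          have h0 : (0:ℝ) ≤ (a * Real.sqrt c) / 2 * (t + θ) ^ (-(1/2):ℝ) := by positivity
          have h1 : (0:ℝ) ≤ (t + θ) ^ (-p) := by positivity
          nlinarith [abs_nonneg (Real.sin (a * Real.sqrt (c * (t + θ)) + β)), mul_nonneg h0 h1]
      _ = (a * Real.sqrt c) / 2 * (t + θ) ^ (-(p + 1/2)) := by
          rw [one_mul, mul_assoc, hcomb]
  have e2 : ‖((Real.cos (a * Real.sqrt (c * (t + θ)) + β) : ℝ) : ℂ) * (-s * ((t + θ : ℝ) : ℂ) ^ (-s - 1))‖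
      ≤ ‖s‖ * (t + θ) ^ (-(p + 1)) := by
    rw [norm_mul, norm_mul, norm_neg, Complex.norm_cpow_eq_rpow_re_of_pos hx, hres2, Complex.norm_real, Real.norm_eq_abs]
    have hcos1 : |Real.cos (a * Real.sqrt (c * (t + θ)) + β)| ≤ 1 := Real.abs_cos_le_one _
    have h1 : (0:ℝ) ≤ ‖s‖ * (t + θ) ^ (-(p+1)) := by positivity
    nlinarith [abs_nonneg (Real.cos (a * Real.sqrt (c * (t + θ)) + β)), norm_nonneg s,
      Real.rpow_pos_of_pos hx (-(p+1))]
  exact le_trans (norm_add_le _ _) (add_le_add e1 e2)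

lemma aux_r_norm (a c θ β : ℝ) (ha : 0 < a) (hc : 0 < c) (s : ℂ) (p : ℝ) (hp : s.re = p)
    {t : ℝ} (ht : 0 < t + θ) :
    ‖((2 / (a * Real.sqrt c) : ℝ) : ℂ) * (((1:ℂ)/2 - s) * (((t + θ : ℝ) : ℂ) ^ ((1:ℂ)/2 - s - 1) * ((Real.sin (a * Real.sqrt (c * (t + θ)) + β) : ℝ) : ℂ)))‖
      ≤ 2 / (a * Real.sqrt c) * ‖(1:ℂ)/2 - s‖ * (t + θ) ^ (-(p + 1/2)) := by
  have hres : ((1:ℂ)/2 - s - 1).re = -(p + 1/2) := by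
    simp [Complex.sub_re, hp]; norm_num; ring
  have hsqc : 0 < Real.sqrt c := Real.sqrt_pos.2 hc
  rw [norm_mul, norm_mul, norm_mul, Complex.norm_cpow_eq_rpow_re_of_pos ht, hres, Complex.norm_real, Real.norm_eq_abs,
    Complex.norm_real, Real.norm_eq_abs,
    abs_of_nonneg (by positivity : (0:ℝ) ≤ 2 / (a * Real.sqrt c))]
  have hsin1 : |Real.sin (a * Real.sqrt (c * (t + θ)) + β)| ≤ 1 := Real.abs_sin_le_one _
  have h2 : (0:ℝ) ≤ (t + θ) ^ (-(p + 1/2)) := by positivity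
  have h4 : (0:ℝ) ≤ 2 / (a * Real.sqrt c) * ‖(1:ℂ)/2 - s‖ * (t + θ) ^ (-(p + 1/2)) := by positivity
  nlinarith [h4, abs_nonneg (Real.sin (a * Real.sqrt (c * (t + θ)) + β))]

lemma aux_G_norm (a c θ β : ℝ) (ha : 0 < a) (hc : 0 < c) (s : ℂ) (p : ℝ) (hp : s.re = p)
    {t : ℝ} (ht : 0 < t + θ) :
    ‖((2 / (a * Real.sqrt c) : ℝ) : ℂ) * (((t + θ : ℝ) : ℂ) ^ ((1:ℂ)/2 - s) * ((Real.sin (a * Real.sqrt (c * (t + θ)) + β) : ℝ) : ℂ))‖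
      ≤ 2 / (a * Real.sqrt c) * (t + θ) ^ (-(p - 1/2)) := by
  have hres : ((1:ℂ)/2 - s).re = -(p - 1/2) := by
    simp [Complex.sub_re, hp]; try norm_num
    try ring
  have hsqc : 0 < Real.sqrt c := Real.sqrt_pos.2 hc
  rw [norm_mul, norm_mul, Complex.norm_cpow_eq_rpow_re_of_pos ht, hres, Complex.norm_real, Real.norm_eq_abs,
    Complex.norm_real, Real.norm_eq_abs,
    abs_of_nonneg (by positivity : (0:ℝ) ≤ 2 / (a * Real.sqrt c))]
  have hsin1 : |Real.sin (a * Real.sqrt (c * (t + θ)) + β)| ≤ 1 := Real.abs_sin_le_one _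
  have h2 : (0:ℝ) ≤ (t + θ) ^ (-(p - 1/2)) := by positivity
  have h4 : (0:ℝ) ≤ 2 / (a * Real.sqrt c) * (t + θ) ^ (-(p - 1/2)) := by positivity
  nlinarith [h4, abs_nonneg (Real.sin (a * Real.sqrt (c * (t + θ)) + β))]

lemma aux_tail {q : ℝ} (hq : 1 < q) {b : ℝ} (hb : 1 ≤ b) :
    Summable (fun k : ℕ => (b + k) ^ (-q)) ∧
    ∑' k : ℕ, (b + k) ^ (-q) ≤ b ^ (-q) + b ^ (1 - q) / (q - 1) := by
  have hb0 : (0:ℝ) < b := lt_of_lt_of_le one_pos hb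
  have hq1 : (0:ℝ) < q - 1 := by linarith
  have hpos : ∀ k : ℕ, (0:ℝ) < b + k := fun k => by positivity
  have hcmp : ∀ k : ℕ, (b + k) ^ (-q) ≤ ((k:ℝ) + 1) ^ (-q) := by
    intro k
    apply Real.rpow_le_rpow_of_nonpos (by positivity) (by linarith [Nat.cast_nonneg (α := ℝ) k])
      (by linarith)
  have hsum : Summable (fun k : ℕ => (b + k) ^ (-q)) := by
    have h1 : Summable (fun n : ℕ => (n:ℝ) ^ (-q)) := Real.summable_nat_rpow.2 (by linarith)
    have h2 : Summable (fun k : ℕ => ((k + 1 : ℕ):ℝ) ^ (-q)) := (summable_nat_add_iff 1).2 h1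
    have h3 : Summable (fun k : ℕ => ((k:ℝ) + 1) ^ (-q)) := by
      convert h2 using 2 with k; push_cast; ring
    exact Summable.of_nonneg_of_le (fun k => (Real.rpow_pos_of_pos (hpos k) _).le) hcmp h3
  refine ⟨hsum, ?_⟩
  have step : ∀ k : ℕ, (b + ((k + 1 : ℕ):ℝ)) ^ (-q) ≤
      ((b + (k:ℝ)) ^ (1 - q) - (b + ((k + 1 : ℕ):ℝ)) ^ (1 - q)) / (q - 1) := by
    intro k
    have hx1 : b + ((k + 1 : ℕ) : ℝ) = (b + k) + 1 := by push_cast; ring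
    set x0 : ℝ := b + k with hx0
    have hx0pos : 0 < x0 := hpos k
    have hx1pos : (0:ℝ) < x0 + 1 := by linarith
    have hint : ∫ t in x0..(x0 + 1), t ^ (-q) = ((x0 + 1) ^ (-q + 1) - x0 ^ (-q + 1)) / (-q + 1) := by
      apply integral_rpow
      right
      refine ⟨by intro h; linarith [h], ?_⟩
      rw [Set.uIcc_of_le (by linarith)]
      intro hmem
      exact absurd hmem.1 (by linarith)
    have hmono : (x0 + 1) ^ (-q) * 1 ≤ ∫ t in x0..(x0 + 1), t ^ (-q) := by
      have hconst : ∫ _t in x0..(x0 + 1), (x0 + 1) ^ (-q) = (x0 + 1) ^ (-q) * 1 := by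
        simp [mul_comm]
      rw [← hconst]
      apply intervalIntegral.integral_mono_on (by linarith) intervalIntegrable_const
      · exact intervalIntegral.intervalIntegrable_rpow (Or.inr (by
          rw [Set.uIcc_of_le (by linarith)]
          intro hmem
          exact absurd hmem.1 (by linarith)))
      · intro x hx
        exact Real.rpow_le_rpow_of_nonpos (by linarith [hx.1]) hx.2 (by linarith)
    rw [hint] at hmono
    have h5 : ((x0 + 1) ^ (-q + 1) - x0 ^ (-q + 1)) / (-q + 1)
        = (x0 ^ (1 - q) - (x0 + 1) ^ (1 - q)) / (q - 1) := by
      rw [div_eq_div_iff (by linarith) (by linarith)]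
      have e : -q + 1 = 1 - q := by ring
      rw [e]; ring
    rw [h5] at hmono
    rw [hx1]
    rw [le_div_iff₀ hq1] at hmono ⊢
    linarith
  apply Real.tsum_le_of_sum_range_le (fun k => (Real.rpow_pos_of_pos (hpos k) _).le)
  intro K
  rcases Nat.eq_zero_or_pos K with hK | hK
  · subst hK
    simp only [Finset.range_zero, Finset.sum_empty]
    positivity
  obtain ⟨K', rfl⟩ := Nat.exists_eq_add_of_le hK
  rw [add_comm 1 K', Finset.sum_range_succ']
  have hf0 : (b + ((0:ℕ):ℝ)) ^ (-q) = b ^ (-q) := by norm_num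
  have hsum2 : ∑ k ∈ Finset.range K', (b + ((k + 1 : ℕ):ℝ)) ^ (-q)
      ≤ (b ^ (1 - q) - (b + (K':ℝ)) ^ (1 - q)) / (q - 1) := by
    calc ∑ k ∈ Finset.range K', (b + ((k + 1 : ℕ):ℝ)) ^ (-q)
        ≤ ∑ k ∈ Finset.range K', ((b + (k:ℝ)) ^ (1 - q) - (b + ((k + 1:ℕ)):ℝ) ^ (1 - q)) / (q - 1) := by
          apply Finset.sum_le_sum
          intro k _
          exact step k
      _ = (∑ k ∈ Finset.range K', ((fun j : ℕ => (b + (j:ℝ)) ^ (1 - q)) k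
            - (fun j : ℕ => (b + (j:ℝ)) ^ (1 - q)) (k + 1))) / (q - 1) := by
          rw [← Finset.sum_div]
          try simp only [Nat.cast_add, Nat.cast_one]
      _ = ((b + ((0:ℕ):ℝ)) ^ (1 - q) - (b + (K':ℝ)) ^ (1 - q)) / (q - 1) := by
          rw [Finset.sum_range_sub' (fun j : ℕ => (b + (j:ℝ)) ^ (1 - q)) K']
      _ = (b ^ (1 - q) - (b + (K':ℝ)) ^ (1 - q)) / (q - 1) := by norm_num
  have hgK : (0:ℝ) ≤ (b + (K':ℝ)) ^ (1 - q) := (Real.rpow_pos_of_pos (by positivity) _).le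
  have h6 : ∑ k ∈ Finset.range K', (b + ((k + 1 : ℕ):ℝ)) ^ (-q) ≤ b ^ (1 - q) / (q - 1) := by
    apply hsum2.trans
    gcongr
    linarith
  rw [hf0]
  linarith

set_option maxHeartbeats 1000000 in
theorem tail_series_bound (a : ℝ) (ha : 0 < a) (β : ℝ)
    (σ : ℝ) (hσ : 0 < σ) (hσ' : σ < 1)
    (w : ℂ) (hw : 1 / 4 < w.re) :
    ∃ C : ℝ, 0 < C ∧ ∀ θ : ℝ, 0 < θ → θ < 1 → ∀ m : ℕ, ∀ M : ℕ, 1 ≤ M →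
      ∃ S : ℂ,
        Tendsto (fun N : ℕ => ∑ n ∈ Finset.Icc M N,
            ((Real.cos (a * Real.sqrt ((m + σ) * (n + θ)) + β) : ℝ) : ℂ) /
              (((n + θ : ℝ) : ℂ) ^ (w + 1 / 4)))
          atTop (𝓝 S) ∧
        ‖S‖ ≤ C * Real.sqrt (m + σ) / (M + θ) ^ (w.re - 1 / 4) := by
  have hδ : 0 < w.re - 1/4 := by linarith
  refine ⟨(a/2 + 2/(a*σ) * ‖(1:ℂ)/2 - (w + 1/4)‖ + ‖(w + 1/4 : ℂ)‖ / Real.sqrt σ + 2/(a*σ))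
      * (1 + 1/(w.re - 1/4)), by positivity, ?_⟩
  intro θ hθ0 hθ1 m M hM
  set s : ℂ := w + 1/4 with hs_def
  set p : ℝ := w.re + 1/4 with hp_def
  have hp : s.re = p := by rw [hs_def, hp_def]; simp [Complex.add_re]
  have hp2 : 1/2 < p := by rw [hp_def]; linarith
  have hpw : p - 1/2 = w.re - 1/4 := by rw [hp_def]; ring
  have hs0 : s ≠ 0 := by
    intro h0; rw [h0] at hp; simp at hp; rw [hp_def] at hp; linarith
  have hz1 : -s ≠ 0 := neg_ne_zero.2 hs0
  have hre12 : ((1:ℂ)/2 - s).re = 1/2 - p := by simp [Complex.sub_re, hp]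
  have hz2 : (1:ℂ)/2 - s ≠ 0 := by
    intro h0; rw [h0] at hre12; simp at hre12; linarith
  have hre3 : ((1:ℂ)/2 - s - 1).re = -(p + 1/2) := by
    simp [Complex.sub_re, hp]; try norm_num
    try ring
  have hz3 : (1:ℂ)/2 - s - 1 ≠ 0 := by
    intro h0; rw [h0] at hre3; simp at hre3; linarith
  set c : ℝ := (m:ℝ) + σ with hc_def
  have hc : 0 < c := by rw [hc_def]; positivity
  have hσc : σ ≤ c := by
    rw [hc_def]; have := Nat.cast_nonneg (α := ℝ) m; linarith
  set lam : ℝ := a * Real.sqrt c with hlam_def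
  have hsqc : 0 < Real.sqrt c := Real.sqrt_pos.2 hc
  have hlam : 0 < lam := by rw [hlam_def]; positivity
  set φ : ℝ → ℝ := fun t => a * Real.sqrt (c * (t + θ)) + β with hφ_def
  set h : ℝ → ℂ := fun t => ((Real.cos (φ t) : ℝ) : ℂ) * ((t + θ : ℝ) : ℂ) ^ (-s) with hh_def
  set G : ℝ → ℂ := fun t => ((2 / lam : ℝ) : ℂ) *
      (((t + θ : ℝ) : ℂ) ^ ((1:ℂ)/2 - s) * ((Real.sin (φ t) : ℝ) : ℂ)) with hG_def
  set r : ℝ → ℂ := fun t => ((2 / lam : ℝ) : ℂ) * (((1:ℂ)/2 - s) *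
      (((t + θ : ℝ) : ℂ) ^ ((1:ℂ)/2 - s - 1) * ((Real.sin (φ t) : ℝ) : ℂ))) with hr_def
  set h' : ℝ → ℂ := fun t => ((-Real.sin (φ t) * (a * (c / (2 * Real.sqrt (c * (t + θ))))) : ℝ) : ℂ) * ((t + θ : ℝ) : ℂ) ^ (-s)
      + ((Real.cos (φ t) : ℝ) : ℂ) * (-s * ((t + θ : ℝ) : ℂ) ^ (-s - 1)) with hh'_def
  clear_value s p c lam φ h G r h'
  have hGd : ∀ t : ℝ, 0 < t + θ → HasDerivAt G (h t + r t) t := by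
    intro t ht
    simp only [hG_def, hh_def, hr_def, hφ_def, hlam_def]
    exact aux_G_deriv a c θ β ha hc s hz2 ht
  have hhd : ∀ t : ℝ, 0 < t + θ → HasDerivAt h (h' t) t := by
    intro t ht
    simp only [hh_def, hh'_def, hφ_def]
    exact aux_h_deriv a c θ β hc s hz1 ht
  have hφd : ∀ t : ℝ, 0 < t + θ → HasDerivAt φ (a * (c / (2 * Real.sqrt (c * (t + θ))))) t := by
    intro t ht
    simp only [hφ_def]
    exact aux_phi_deriv a c θ β hc ht
  have hh'n : ∀ t : ℝ, 0 < t + θ → ‖h' t‖ ≤ lam/2 * (t+θ)^(-(p+1/2)) + ‖s‖ * (t+θ)^(-(p+1)) := by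
    intro t ht
    simp only [hh'_def, hφ_def, hlam_def]
    exact aux_h'_norm a c θ β ha hc s p hp ht
  have hrn : ∀ t : ℝ, 0 < t + θ → ‖r t‖ ≤ 2/lam * ‖(1:ℂ)/2 - s‖ * (t+θ)^(-(p+1/2)) := by
    intro t ht
    simp only [hr_def, hφ_def, hlam_def]
    exact aux_r_norm a c θ β ha hc s p hp ht
  have hGn : ∀ t : ℝ, 0 < t + θ → ‖G t‖ ≤ 2/lam * (t+θ)^(-(p - 1/2)) := by
    intro t ht
    simp only [hG_def, hφ_def, hlam_def]
    exact aux_G_norm a c θ β ha hc s p hp ht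
  have hcontAt : ∀ x : ℝ, 0 < x + θ → ContinuousAt (fun t => h t + r t) x := by
    intro x hx
    have hφc : ContinuousAt φ x := (hφd x hx).continuousAt
    have hsinc : ContinuousAt (fun t => ((Real.sin (φ t) : ℝ) : ℂ)) x :=
      Complex.continuous_ofReal.continuousAt.comp (Real.continuous_sin.continuousAt.comp hφc)
    have hXc : ContinuousAt (fun t : ℝ => ((t + θ : ℝ) : ℂ) ^ ((1:ℂ)/2 - s - 1)) x :=
      (aux_cpow_deriv ((1:ℂ)/2 - s - 1) hz3 hx).continuousAt
    have hhc : ContinuousAt h x := (hhd x hx).continuousAt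
    have hrc : ContinuousAt r x := by
      rw [hr_def]
      exact continuousAt_const.mul (continuousAt_const.mul (hXc.mul hsinc))
    exact hhc.add hrc
  set A1 : ℝ := lam/2 + 2/lam * ‖(1:ℂ)/2 - s‖ with hA1_def
  set A2 : ℝ := ‖s‖ with hA2_def
  clear_value A1 A2
  have hA1nn : 0 ≤ A1 := by rw [hA1_def]; positivity
  have hA2nn : 0 ≤ A2 := by rw [hA2_def]; positivity
  set d : ℕ → ℂ := fun n => h n - (G ((n:ℝ) + 1) - G n) with hd_def
  clear_value d
  have hdb : ∀ n : ℕ, ‖d n‖ ≤ A1 * ((n:ℝ)+θ)^(-(p+1/2)) + A2 * ((n:ℝ)+θ)^(-(p+1)) := by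
    intro n
    have hnθ : 0 < (n:ℝ) + θ := by positivity
    have hle : (n:ℝ) ≤ (n:ℝ) + 1 := by linarith
    have huIcc : Set.uIcc (n:ℝ) ((n:ℝ)+1) = Set.Icc (n:ℝ) ((n:ℝ)+1) := Set.uIcc_of_le hle
    have hmem_pos : ∀ y ∈ Set.Icc (n:ℝ) ((n:ℝ)+1), 0 < y + θ := by
      intro y hy
      have hn0 : (0:ℝ) ≤ (n:ℝ) := Nat.cast_nonneg n
      have := hy.1
      linarith
    have hder : ∀ x ∈ Set.uIcc (n:ℝ) ((n:ℝ)+1), HasDerivAt G (h x + r x) x := by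
      intro x hx; rw [huIcc] at hx; exact hGd x (hmem_pos x hx)
    have hcont : ContinuousOn (fun t => h t + r t) (Set.uIcc (n:ℝ) ((n:ℝ)+1)) := by
      intro x hx; rw [huIcc] at hx
      exact (hcontAt x (hmem_pos x hx)).continuousWithinAt
    have hint : IntervalIntegrable (fun t => h t + r t) MeasureTheory.volume (n:ℝ) ((n:ℝ)+1) :=
      hcont.intervalIntegrable
    have hftc : (∫ t in (n:ℝ)..((n:ℝ)+1), (h t + r t)) = G ((n:ℝ)+1) - G (n:ℝ) :=
      intervalIntegral.integral_eq_sub_of_hasDerivAt hder hint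
    have hd_eq : d n = ∫ t in (n:ℝ)..((n:ℝ)+1), (h (n:ℝ) - (h t + r t)) := by
      rw [intervalIntegral.integral_sub intervalIntegrable_const hint,
        intervalIntegral.integral_const, hftc, hd_def]
      simp
    have hbound : ∀ t ∈ Set.uIoc (n:ℝ) ((n:ℝ)+1),
        ‖h (n:ℝ) - (h t + r t)‖ ≤ (lam/2 * ((n:ℝ)+θ)^(-(p+1/2)) + A2 * ((n:ℝ)+θ)^(-(p+1)))
          + 2/lam * ‖(1:ℂ)/2 - s‖ * ((n:ℝ)+θ)^(-(p+1/2)) := by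
      intro t ht'
      rw [Set.uIoc_of_le hle] at ht'
      have htmem : t ∈ Set.Icc (n:ℝ) ((n:ℝ)+1) := ⟨ht'.1.le, ht'.2⟩
      have htθ : 0 < t + θ := hmem_pos t htmem
      have hmono : ∀ q : ℝ, 0 ≤ q → ∀ y, y ∈ Set.Icc (n:ℝ) ((n:ℝ)+1) → (y+θ)^(-q) ≤ ((n:ℝ)+θ)^(-q) := by
        intro q hq y hy
        have hy1 : (n:ℝ) ≤ y := hy.1
        have : (n:ℝ) + θ ≤ y + θ := by linarith
        exact Real.rpow_le_rpow_of_nonpos hnθ this (neg_nonpos.2 hq)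
      have hq1 : (0:ℝ) ≤ p + 1/2 := by linarith
      have hq2 : (0:ℝ) ≤ p + 1 := by linarith
      have hBy : ∀ y ∈ Set.Icc (n:ℝ) ((n:ℝ)+1),
          ‖h' y‖ ≤ lam/2 * ((n:ℝ)+θ)^(-(p+1/2)) + A2 * ((n:ℝ)+θ)^(-(p+1)) := by
        intro y hy
        apply (hh'n y (hmem_pos y hy)).trans
        apply add_le_add
        · exact mul_le_mul_of_nonneg_left (hmono _ hq1 y hy) (by positivity)
        · exact mul_le_mul_of_nonneg_left (hmono _ hq2 y hy) hA2nn
      have h1 : ‖h t - h (n:ℝ)‖ ≤ (lam/2 * ((n:ℝ)+θ)^(-(p+1/2)) + A2 * ((n:ℝ)+θ)^(-(p+1))) * ‖t - (n:ℝ)‖ :=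
        (convex_Icc _ _).norm_image_sub_le_of_norm_hasDerivWithin_le
          (fun y hy => (hhd y (hmem_pos y hy)).hasDerivWithinAt) hBy
          (Set.left_mem_Icc.2 hle) htmem
      have htn : ‖t - (n:ℝ)‖ ≤ 1 := by
        rw [Real.norm_eq_abs, abs_of_nonneg (by linarith [ht'.1])]
        linarith [ht'.2]
      have h1' : ‖h (n:ℝ) - h t‖ ≤ lam/2 * ((n:ℝ)+θ)^(-(p+1/2)) + A2 * ((n:ℝ)+θ)^(-(p+1)) := by
        rw [norm_sub_rev]
        apply h1.trans
        have hBnn : (0:ℝ) ≤ lam/2 * ((n:ℝ)+θ)^(-(p+1/2)) + A2 * ((n:ℝ)+θ)^(-(p+1)) := by positivity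
        nlinarith [norm_nonneg (t - (n:ℝ))]
      have h2 : ‖r t‖ ≤ 2/lam * ‖(1:ℂ)/2 - s‖ * ((n:ℝ)+θ)^(-(p+1/2)) := by
        apply (hrn t htθ).trans
        exact mul_le_mul_of_nonneg_left (hmono _ hq1 t htmem) (by positivity)
      have e0 : h (n:ℝ) - (h t + r t) = (h (n:ℝ) - h t) - r t := by ring
      rw [e0]
      exact (norm_sub_le _ _).trans (add_le_add h1' h2)
    have hkey := intervalIntegral.norm_integral_le_of_norm_le_const hbound
    rw [← hd_eq] at hkey
    have e1 : |((n:ℝ)+1) - (n:ℝ)| = 1 := by simp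
    rw [e1, mul_one] at hkey
    apply hkey.trans_eq
    rw [hA1_def]; ring
  set b : ℝ := (M:ℝ) + θ with hb_def
  have hM1 : (1:ℝ) ≤ (M:ℝ) := by exact_mod_cast hM
  have hb1 : 1 ≤ b := by rw [hb_def]; linarith
  have hb0 : 0 < b := lt_of_lt_of_le one_pos hb1
  set u : ℕ → ℂ := fun k => d (M + k) with hu_def
  clear_value b u
  have hub : ∀ k : ℕ, ‖u k‖ ≤ A1 * (b + k)^(-(p+1/2)) + A2 * (b + k)^(-(p+1)) := by
    intro k
    have hcast : ((M + k : ℕ):ℝ) + θ = b + k := by rw [hb_def]; push_cast; ring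
    have hthis := hdb (M + k)
    rw [hcast] at hthis
    simpa [hu_def] using hthis
  obtain ⟨hS1, hT1⟩ := aux_tail (q := p + 1/2) (by linarith) hb1
  obtain ⟨hS2, hT2⟩ := aux_tail (q := p + 1) (by linarith) hb1
  have husumn : Summable (fun k => ‖u k‖) := by
    apply Summable.of_nonneg_of_le (fun k => norm_nonneg _) hub
    exact (hS1.mul_left A1).add (hS2.mul_left A2)
  have husum : Summable u := husumn.of_norm
  refine ⟨(∑' k, u k) - G ((M:ℝ)), ?_, ?_⟩
  · -- the Tendsto claim
    have hterm : (fun N : ℕ => ∑ n ∈ Finset.Icc M N,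
        ((Real.cos (a * Real.sqrt (c * ((n:ℝ) + θ)) + β) : ℝ) : ℂ) / (((n:ℝ) + θ : ℝ) : ℂ) ^ s)
        = fun N : ℕ => ∑ n ∈ Finset.Icc M N, h (n:ℝ) := by
      funext N
      apply Finset.sum_congr rfl
      intro n _
      rw [hh_def]
      simp only [hφ_def]
      rw [Complex.cpow_neg, div_eq_mul_inv]
    rw [hterm]
    have hsum_eq : ∀ N : ℕ, M ≤ N → ∑ n ∈ Finset.Icc M N, h (n:ℝ)
        = (∑ k ∈ Finset.range (N + 1 - M), u k) + (G (((M + (N + 1 - M) : ℕ)):ℝ) - G ((M:ℝ))) := by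
      intro N hN
      rw [← Finset.Ico_add_one_right_eq_Icc, Finset.sum_Ico_eq_sum_range]
      have h2 : ∀ k : ℕ, h (((M + k : ℕ)):ℝ) = u k + (G (((M + (k+1) : ℕ)):ℝ) - G (((M + k : ℕ)):ℝ)) := by
        intro k
        have e : (((M + (k+1) : ℕ)):ℝ) = ((M + k : ℕ):ℝ) + 1 := by push_cast; ring
        rw [e, hu_def]
        simp only [hd_def]
        ring
      calc ∑ k ∈ Finset.range (N + 1 - M), h (((M + k:ℕ)):ℝ)
          = ∑ k ∈ Finset.range (N + 1 - M), (u k + (G (((M + (k+1) : ℕ)):ℝ) - G (((M + k : ℕ)):ℝ))) :=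
            Finset.sum_congr rfl (fun k _ => h2 k)
        _ = (∑ k ∈ Finset.range (N+1-M), u k)
            + ∑ k ∈ Finset.range (N+1-M), (G (((M + (k+1) : ℕ)):ℝ) - G (((M + k : ℕ)):ℝ)) :=
            Finset.sum_add_distrib
        _ = (∑ k ∈ Finset.range (N + 1 - M), u k) + (G (((M + (N + 1 - M) : ℕ)):ℝ) - G ((M:ℝ))) := by
            rw [Finset.sum_range_sub (fun k => G (((M + k : ℕ)):ℝ))]
            norm_num
    have hKlim : Tendsto (fun N : ℕ => N + 1 - M) atTop atTop := by
      apply tendsto_atTop_atTop.2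
      intro bb
      exact ⟨bb + M, fun N hN => by omega⟩
    have hA : Tendsto (fun N : ℕ => ∑ k ∈ Finset.range (N + 1 - M), u k) atTop (𝓝 (∑' k, u k)) :=
      (husum.hasSum.tendsto_sum_nat).comp hKlim
    have hBarg : Tendsto (fun N : ℕ => (((M + (N + 1 - M) : ℕ)):ℝ) + θ) atTop atTop := by
      apply tendsto_atTop_mono (f := fun N : ℕ => (N:ℝ)) ?_ tendsto_natCast_atTop_atTop
      intro N
      have h1 : N ≤ M + (N + 1 - M) := by omega
      have h2 : (N:ℝ) ≤ ((M + (N + 1 - M) : ℕ):ℝ) := by exact_mod_cast h1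
      linarith
    have hGlim : Tendsto (fun N : ℕ => G (((M + (N + 1 - M) : ℕ)):ℝ)) atTop (𝓝 0) := by
      have hGb : ∀ N : ℕ, ‖G (((M + (N + 1 - M) : ℕ)):ℝ)‖
          ≤ 2/lam * ((((M + (N + 1 - M) : ℕ)):ℝ) + θ)^(-(p - 1/2)) :=
        fun N => hGn _ (by positivity)
      have htend : Tendsto (fun N : ℕ => 2/lam * ((((M + (N + 1 - M) : ℕ)):ℝ) + θ)^(-(p - 1/2)))
          atTop (𝓝 0) := by
        have h0 := (tendsto_rpow_neg_atTop (y := p - 1/2) (by linarith)).comp hBarg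
        have h1 := h0.const_mul (2/lam)
        simpa using h1
      exact squeeze_zero_norm hGb htend
    have hval : (∑' k, u k) + (0 - G ((M:ℝ))) = (∑' k, u k) - G ((M:ℝ)) := by ring
    have hfin : Tendsto (fun N : ℕ => (∑ k ∈ Finset.range (N + 1 - M), u k)
        + (G (((M + (N + 1 - M) : ℕ)):ℝ) - G ((M:ℝ)))) atTop (𝓝 ((∑' k, u k) - G ((M:ℝ)))) := by
      rw [← hval]
      exact hA.add (hGlim.sub tendsto_const_nhds)
    exact Tendsto.congr'
      (by filter_upwards [eventually_ge_atTop M] with N hN; exact (hsum_eq N hN).symm) hfin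
  · -- the norm bound
    have hδ2 : 0 < p - 1/2 := by linarith
    have hE : (0:ℝ) ≤ b ^ (-(p - 1/2)) := by positivity
    have h1 : ‖(∑' k, u k) - G ((M:ℝ))‖ ≤ (∑' k, ‖u k‖) + ‖G ((M:ℝ))‖ :=
      (norm_sub_le _ _).trans (add_le_add_left (norm_tsum_le_tsum_norm husumn) _)
    have h2 : (∑' k, ‖u k‖) ≤ A1 * (∑' k : ℕ, (b + k)^(-(p+1/2))) + A2 * (∑' k : ℕ, (b + k)^(-(p+1))) := by
      have hle := Summable.tsum_le_tsum hub husumn ((hS1.mul_left A1).add (hS2.mul_left A2))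
      rwa [Summable.tsum_add (hS1.mul_left A1) (hS2.mul_left A2), tsum_mul_left, tsum_mul_left] at hle
    have hT1' : (∑' k : ℕ, (b + k)^(-(p+1/2))) ≤ (1 + 1/(p - 1/2)) * b^(-(p-1/2)) := by
      apply hT1.trans
      have e1 : b ^ (-(p+1/2)) ≤ b ^ (-(p-1/2)) := Real.rpow_le_rpow_of_exponent_le hb1 (by linarith)
      have e2 : b ^ (1 - (p+1/2)) = b ^ (-(p-1/2)) := by congr 1; ring
      have e3 : p + 1/2 - 1 = p - 1/2 := by ring
      rw [e2, e3]
      have expand : (1 + 1/(p-1/2)) * b^(-(p-1/2)) = b^(-(p-1/2)) + b^(-(p-1/2))/(p-1/2) := by ring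
      linarith
    have hT2' : (∑' k : ℕ, (b + k)^(-(p+1))) ≤ (1 + 1/(p - 1/2)) * b^(-(p-1/2)) := by
      apply hT2.trans
      have e1 : b ^ (-(p+1)) ≤ b ^ (-(p-1/2)) := Real.rpow_le_rpow_of_exponent_le hb1 (by linarith)
      have e2 : b ^ (1 - (p+1)) ≤ b ^ (-(p-1/2)) := Real.rpow_le_rpow_of_exponent_le hb1 (by linarith)
      have e3 : p + 1 - 1 = p := by ring
      rw [e3]
      have h4 : b ^ (1 - (p+1)) / p ≤ b ^ (-(p-1/2)) / (p - 1/2) :=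
        div_le_div₀ hE e2 hδ2 (by linarith)
      have expand : (1 + 1/(p-1/2)) * b^(-(p-1/2)) = b^(-(p-1/2)) + b^(-(p-1/2))/(p-1/2) := by ring
      linarith
    have hGM : ‖G ((M:ℝ))‖ ≤ 2/lam * b^(-(p-1/2)) := by
      have hMθ : (0:ℝ) < (M:ℝ) + θ := by linarith
      have hthis := hGn ((M:ℝ)) hMθ
      rwa [← hb_def] at hthis
    have hcc : Real.sqrt c * Real.sqrt c = c := Real.mul_self_sqrt hc.le
    have base : 2/lam ≤ 2/(a*σ) * Real.sqrt c := by
      rw [hlam_def, div_le_iff₀ (by positivity : (0:ℝ) < a * Real.sqrt c)]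
      have hexp : 2/(a*σ) * Real.sqrt c * (a * Real.sqrt c) = 2 * c / σ := by
        field_simp
        linear_combination hcc
      rw [hexp, le_div_iff₀ hσ]
      linarith
    have hKc : A1 + A2 + 2/lam ≤ (a/2 + 2/(a*σ) * ‖(1:ℂ)/2 - s‖ + A2 / Real.sqrt σ + 2/(a*σ)) * Real.sqrt c := by
      have hsσ : Real.sqrt σ ≤ Real.sqrt c := Real.sqrt_le_sqrt hσc
      have hσs : 0 < Real.sqrt σ := Real.sqrt_pos.2 hσ
      have k1 : lam/2 = a/2 * Real.sqrt c := by rw [hlam_def]; ring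
      have k2 : 2/lam * ‖(1:ℂ)/2 - s‖ ≤ 2/(a*σ) * ‖(1:ℂ)/2 - s‖ * Real.sqrt c := by
        calc 2/lam * ‖(1:ℂ)/2 - s‖ ≤ (2/(a*σ) * Real.sqrt c) * ‖(1:ℂ)/2 - s‖ :=
              mul_le_mul_of_nonneg_right base (norm_nonneg _)
          _ = 2/(a*σ) * ‖(1:ℂ)/2 - s‖ * Real.sqrt c := by ring
      have k3 : A2 ≤ A2 / Real.sqrt σ * Real.sqrt c := by
        rw [div_mul_eq_mul_div, le_div_iff₀ hσs]
        exact mul_le_mul_of_nonneg_left hsσ hA2nn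
      have expand : (a/2 + 2/(a*σ) * ‖(1:ℂ)/2 - s‖ + A2/Real.sqrt σ + 2/(a*σ)) * Real.sqrt c
          = a/2 * Real.sqrt c + 2/(a*σ) * ‖(1:ℂ)/2 - s‖ * Real.sqrt c
            + A2/Real.sqrt σ * Real.sqrt c + 2/(a*σ) * Real.sqrt c := by ring
      rw [hA1_def, expand]
      linarith [k1, k2, k3, base]
    have hx1 : (1:ℝ) ≤ 1 + 1/(p-1/2) := by
      have : 0 < 1/(p-1/2) := by positivity
      linarith
    have m1 := mul_le_mul_of_nonneg_left hT1' hA1nn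
    have m2 := mul_le_mul_of_nonneg_left hT2' hA2nn
    have m3 : 2/lam * b^(-(p-1/2)) ≤ 2/lam * ((1 + 1/(p-1/2)) * b^(-(p-1/2))) :=
      mul_le_mul_of_nonneg_left (le_mul_of_one_le_left hE hx1) (by positivity)
    have expand3 : (A1 + A2 + 2/lam) * ((1 + 1/(p-1/2)) * b^(-(p-1/2)))
        = A1 * ((1 + 1/(p-1/2)) * b^(-(p-1/2))) + A2 * ((1 + 1/(p-1/2)) * b^(-(p-1/2)))
          + 2/lam * ((1 + 1/(p-1/2)) * b^(-(p-1/2))) := by ring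
    have hsum_all : ‖(∑' k, u k) - G ((M:ℝ))‖ ≤ (A1 + A2 + 2/lam) * ((1 + 1/(p-1/2)) * b^(-(p-1/2))) := by
      rw [expand3]
      linarith [h1, h2, hGM, m1, m2, m3]
    have last := mul_le_mul_of_nonneg_right hKc
      (by positivity : (0:ℝ) ≤ (1 + 1/(p-1/2)) * b^(-(p-1/2)))
    have hfinal := hsum_all.trans last
    rw [hpw] at hfinal
    have hgoal_eq : (a/2 + 2/(a*σ) * ‖(1:ℂ)/2 - s‖ + A2/Real.sqrt σ + 2/(a*σ)) * Real.sqrt c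
          * ((1 + 1/(w.re - 1/4)) * b^(-(w.re - 1/4)))
        = (a/2 + 2/(a*σ) * ‖(1:ℂ)/2 - s‖ + A2/Real.sqrt σ + 2/(a*σ)) * (1 + 1/(w.re - 1/4))
          * Real.sqrt c / b ^ (w.re - 1/4) := by
      rw [Real.rpow_neg hb0.le]
      ring
    rw [hgoal_eq] at hfinal
    exact hfinal
end
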